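/- Let g : ℝ²₊ → ℝ²₊ be differentiable at y* > 0 with g(y*) = y*, such that r·y* is a fixed point for all r > 0 and ‖g(y)‖₁ = ‖y‖₁ for all y > 0. Then there exists R ∈ ℝ such that Dg(y*)·(1,-1) = R·(1,-1), and hence the spectrum of Dg(y*) equals {1, R}. -/

import Mathlib

theorem stmt_8 (g : (Fin 2 → ℝ) → (Fin 2 → ℝ))
    (hposmap : ∀ y : Fin 2 → ℝ, (∀ i, 0 < y i) → ∀ i, 0 < g y i)
    (hcons : ∀ y : Fin 2 → ℝ, (∀ i, 0 < y i) → g y 0 + g y 1 = y 0 + y 1)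
    (ystar : Fin 2 → ℝ) (hpos : ∀ i, 0 < ystar i)
    (hfixstar : g ystar = ystar)
    (D : (Fin 2 → ℝ) →L[ℝ] (Fin 2 → ℝ))
    (hderiv : HasFDerivAt g D ystar)
    (hfix : ∀ r : ℝ, 0 < r → g (r • ystar) = r • ystar) :
    ∃ R : ℝ, D ![(1 : ℝ), -1] = R • ![(1 : ℝ), -1] ∧
      spectrum ℝ D = {1, R} := by
  classical
  set w : Fin 2 → ℝ := ![(1 : ℝ), -1] with hw
  -- the positive cone is open and contains ystar
  have hopen : IsOpen {y : Fin 2 → ℝ | ∀ i, 0 < y i} := by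
    have : {y : Fin 2 → ℝ | ∀ i, 0 < y i} = ⋂ i, {y : Fin 2 → ℝ | 0 < y i} := by
      ext y; simp
    rw [this]
    exact isOpen_iInter_of_finite fun i =>
      isOpen_lt continuous_const (continuous_apply i)
  have hmem : {y : Fin 2 → ℝ | ∀ i, 0 < y i} ∈ nhds ystar := hopen.mem_nhds hpos
  -- sum functional
  set s : (Fin 2 → ℝ) →L[ℝ] ℝ :=
    (ContinuousLinearMap.proj 0 : (Fin 2 → ℝ) →L[ℝ] ℝ) +
      (ContinuousLinearMap.proj 1 : (Fin 2 → ℝ) →L[ℝ] ℝ) with hsdef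
  have hs : ∀ y : Fin 2 → ℝ, s y = y 0 + y 1 := fun y => rfl
  have hsg : HasFDerivAt (fun y => s (g y)) (s.comp D) ystar :=
    s.hasFDerivAt.comp ystar hderiv
  have heq : (fun y => s (g y)) =ᶠ[nhds ystar] fun y => s y := by
    filter_upwards [hmem] with y hy
    simp only [hs]
    exact hcons y hy
  have hsg' : HasFDerivAt (fun y : Fin 2 → ℝ => s y) (s.comp D) ystar :=
    hsg.congr_of_eventuallyEq heq.symm
  have hsD : s.comp D = s := hsg'.unique s.hasFDerivAt
  have hsum : ∀ v : Fin 2 → ℝ, D v 0 + D v 1 = v 0 + v 1 := by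
    intro v
    have := congrFun (congrArg (fun (f : (Fin 2 → ℝ) →L[ℝ] ℝ) => (f : (Fin 2 → ℝ) → ℝ)) hsD) v
    simpa [hs] using this
  -- D ystar = ystar
  have h1 : HasDerivAt (fun t : ℝ => t • ystar) ystar 1 := by
    simpa using (hasDerivAt_id (1 : ℝ)).smul_const ystar
  have hray : HasDerivAt (fun t : ℝ => g (t • ystar)) (D ystar) 1 := by
    have h1' : HasFDerivAt g D ((1 : ℝ) • ystar) := by simpa using hderiv
    exact h1'.comp_hasDerivAt 1 h1
  have heq2 : (fun t : ℝ => g (t • ystar)) =ᶠ[nhds (1 : ℝ)] fun t => t • ystar := by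
    filter_upwards [isOpen_Ioi.mem_nhds (by norm_num : (0:ℝ) < 1)] with t ht
    exact hfix t ht
  have hray' : HasDerivAt (fun t : ℝ => t • ystar) (D ystar) 1 :=
    hray.congr_of_eventuallyEq heq2.symm
  have hDy : D ystar = ystar := hray'.unique h1
  -- D w = R • w
  set R : ℝ := D w 0 with hR
  have hwsum : D w 0 + D w 1 = 0 := by
    have := hsum w
    simpa [hw] using this
  have hDw : D w = R • w := by
    funext i
    fin_cases i
    · simp [hw, hR]
    · have : D w 1 = -R := by rw [hR]; linarith
      simp [hw] at this ⊢; linarith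
  refine ⟨R, hDw, ?_⟩
  -- transfer spectrum to Module.End
  have hspec : spectrum ℝ D = spectrum ℝ (D : (Fin 2 → ℝ) →ₗ[ℝ] (Fin 2 → ℝ)) := by
    rw [← AlgEquiv.spectrum_eq (Module.End.toContinuousLinearMap (Fin 2 → ℝ))
      (D : (Fin 2 → ℝ) →ₗ[ℝ] (Fin 2 → ℝ))]
    congr 1
  have hwne : w ≠ 0 := by
    intro h
    have := congrFun h 0
    simp [hw] at this
  have hyne : ystar ≠ 0 := by
    intro h
    have := congrFun h 0
    exact absurd this (ne_of_gt (hpos 0))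
  rw [hspec]
  ext μ
  rw [← Module.End.hasEigenvalue_iff_mem_spectrum]
  constructor
  · intro hμ
    obtain ⟨v, hv⟩ := hμ.exists_hasEigenvector
    have hvne : v ≠ 0 := hv.2
    have hDv : D v = μ • v := hv.apply_eq_smul
    by_cases hc : v 0 + v 1 = 0
    · -- v is a multiple of w
      have hv1 : v 1 = -v 0 := by linarith
      have hvw : v = v 0 • w := by
        funext i; fin_cases i <;> simp [hw, hv1]
      have hv0 : v 0 ≠ 0 := by
        intro h0
        apply hvne
        rw [hvw, h0, zero_smul]
      have hDv0 : D v 0 = μ * v 0 := by rw [hDv]; simp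
      have h2 : D v 0 = v 0 * R := by
        rw [hvw, map_smul, hDw]
        simp [hw]
      right
      have hmr : μ * v 0 = R * v 0 := by rw [← hDv0, h2]; ring
      exact mul_right_cancel₀ hv0 hmr
    · -- sum nonzero gives μ = 1
      have h0 : D v 0 = μ * v 0 := by rw [hDv]; simp
      have h1' : D v 1 = μ * v 1 := by rw [hDv]; simp
      have hkey : μ * (v 0 + v 1) = 1 * (v 0 + v 1) := by
        have h3 := hsum v
        rw [h0, h1'] at h3
        ring_nf
        ring_nf at h3
        linarith
      left
      exact mul_right_cancel₀ hc hkey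
  · rintro (rfl | rfl)
    · refine Module.End.hasEigenvalue_of_hasEigenvector ⟨?_, hyne⟩
      rw [Module.End.mem_eigenspace_iff]
      show D ystar = (1:ℝ) • ystar
      rw [hDy, one_smul]
    · refine Module.End.hasEigenvalue_of_hasEigenvector ⟨?_, hwne⟩
      rw [Module.End.mem_eigenspace_iff]
      show D w = R • w
      exact hDw
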